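/- If N : I^n → I is a Jensen convex n-variable mean (i.e., N((x+y)/2) ≤ (N(x)+N(y))/2 for all x,y ∈ I^n) and M : I^n → I is a cyclically symmetric mean with N ≤ M pointwise, then M(x) ≥ (x₁+⋯+xₙ)/n for all x ∈ I^n. -/

import Mathlib

open Finset Filter
open Fin.NatCast Fin.CommRing

theorem stmt_0 (I : Set ℝ) (hI : Convex ℝ I) (n : ℕ) (hn : 0 < n)
    (M N : (Fin n → ℝ) → ℝ)
    (hMmean : ∀ x : Fin n → ℝ, (∀ i, x i ∈ I) →
      (∃ i, x i ≤ M x) ∧ (∃ i, M x ≤ x i))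
    (hNmean : ∀ x : Fin n → ℝ, (∀ i, x i ∈ I) →
      (∃ i, x i ≤ N x) ∧ (∃ i, N x ≤ x i))
    (hNI : ∀ x : Fin n → ℝ, (∀ i, x i ∈ I) → N x ∈ I)
    (hMcyc : ∀ x : Fin n → ℝ, (∀ i, x i ∈ I) → M (x ∘ finRotate n) = M x)
    (hNconv : ∀ x y : Fin n → ℝ, (∀ i, x i ∈ I) → (∀ i, y i ∈ I) →
      N (fun i => (x i + y i) / 2) ≤ (N x + N y) / 2)
    (hNM : ∀ x : Fin n → ℝ, (∀ i, x i ∈ I) → N x ≤ M x) :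
    ∀ x : Fin n → ℝ, (∀ i, x i ∈ I) → (∑ i, x i) / n ≤ M x := by
  obtain ⟨m, rfl⟩ := Nat.exists_eq_succ_of_ne_zero hn.ne'
  intro x hx
  -- rotation invariance of M, iterated
  have hrot : ∀ y : Fin (m+1) → ℝ, (∀ i, y i ∈ I) → ∀ k : ℕ,
      M (fun i => y (i + (k : Fin (m+1)))) = M y := by
    intro y hy k
    induction k with
    | zero => simp
    | succ k ih =>
      have h1 : (fun i : Fin (m+1) => y (i + ((k+1 : ℕ) : Fin (m+1)))) =
          (fun i => y (i + (k : Fin (m+1)))) ∘ finRotate (m+1) := by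
        funext i
        simp only [Function.comp_apply, finRotate_succ_apply]
        congr 1
        push_cast
        ring
      rw [h1, hMcyc _ (fun i => hy _), ih]
  -- full-cycle sums
  have hcyc_sum : ∀ i : Fin (m+1),
      ∑ j ∈ Finset.range (m+1), x (i + (j : Fin (m+1))) = ∑ t, x t := by
    intro i
    rw [← Fin.sum_univ_eq_sum_range (fun j => x (i + (j : Fin (m+1)))) (m+1)]
    simp only [Fin.cast_val_eq_self]
    exact Equiv.sum_comp (Equiv.addLeft i) x
  -- the dyadic averaging operator
  set v : ℕ → (Fin (m+1) → ℝ) → Fin (m+1) → ℝ :=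
    fun k y i => (∑ j ∈ Finset.range (2^k), y (i + (j : Fin (m+1)))) / 2^k with hv
  have hvstep : ∀ (k : ℕ) (y : Fin (m+1) → ℝ), v (k+1) y =
      fun i => (v k y i + v k (fun i' => y (i' + ((2^k : ℕ) : Fin (m+1)))) i) / 2 := by
    intro k y
    funext i
    have h2 : 2^(k+1) = 2^k + 2^k := by ring
    have hsplit : ∑ j ∈ Finset.range (2^(k+1)), y (i + (j : Fin (m+1))) =
        ∑ j ∈ Finset.range (2^k), y (i + (j : Fin (m+1))) +
        ∑ j ∈ Finset.range (2^k), y ((i + ((2^k : ℕ) : Fin (m+1))) + (j : Fin (m+1))) := by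
      rw [h2, Finset.sum_range_add]
      congr 1
      refine Finset.sum_congr rfl fun j _ => ?_
      congr 1
      push_cast
      ring
    simp only [hv, hsplit]
    have hpos : (0:ℝ) < 2^k := by positivity
    have : ((2:ℝ)^(k+1)) = 2^k * 2 := by ring
    rw [this]
    field_simp
    ring
  -- main induction
  have hmain : ∀ (k : ℕ) (y : Fin (m+1) → ℝ), (∀ i, y i ∈ I) →
      (∀ i, v k y i ∈ I) ∧ N (v k y) ≤ M y := by
    intro k
    induction k with
    | zero =>
      intro y hy
      have h0 : v 0 y = y := by
        funext i; simp [hv]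
      rw [h0]
      exact ⟨hy, hNM y hy⟩
    | succ k ih =>
      intro y hy
      set y' : Fin (m+1) → ℝ := fun i' => y (i' + ((2^k : ℕ) : Fin (m+1))) with hy'def
      have hy'I : ∀ i, y' i ∈ I := fun i => hy _
      obtain ⟨h1, h2⟩ := ih y hy
      obtain ⟨h1', h2'⟩ := ih y' hy'I
      rw [hvstep k y]
      constructor
      · intro i
        show (v k y i + v k y' i) / 2 ∈ I
        have hmem := hI (h1 i) (h1' i) (by norm_num : (0:ℝ) ≤ 1/2)
          (by norm_num : (0:ℝ) ≤ 1/2) (by norm_num)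
        have heq : (v k y i + v k y' i) / 2 =
            (1/2 : ℝ) • v k y i + (1/2 : ℝ) • v k y' i := by
          simp [smul_eq_mul]; ring
        rw [heq]; exact hmem
      · have hMy' : M y' = M y := hrot y hy (2^k)
        show N (fun i => (v k y i + v k y' i) / 2) ≤ M y
        calc N (fun i => (v k y i + v k y' i) / 2)
            ≤ (N (v k y) + N (v k y')) / 2 := hNconv _ _ h1 h1'
          _ ≤ (M y + M y') / 2 := by linarith
          _ = M y := by rw [hMy']; ring
  -- bounds on x
  obtain ⟨i0, -, hL⟩ := Finset.exists_min_image Finset.univ x Finset.univ_nonempty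
  obtain ⟨i1, -, hU⟩ := Finset.exists_max_image Finset.univ x Finset.univ_nonempty
  set L := x i0 with hLdef
  set U := x i1 with hUdef
  set S := ∑ t, x t with hSdef
  have hSL : (m+1 : ℝ) * L ≤ S := by
    calc (m+1 : ℝ) * L = ∑ _t : Fin (m+1), L := by simp [mul_comm]
      _ ≤ S := Finset.sum_le_sum fun t _ => hL t (Finset.mem_univ t)
  have hSU : S ≤ (m+1 : ℝ) * U := by
    calc S ≤ ∑ _t : Fin (m+1), U := Finset.sum_le_sum fun t _ => hU t (Finset.mem_univ t)
      _ = (m+1 : ℝ) * U := by simp [mul_comm]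
  -- full cycle sum lemma for multiples
  have hfull : ∀ (q : ℕ) (i : Fin (m+1)),
      ∑ j ∈ Finset.range ((m+1)*q), x (i + (j : Fin (m+1))) = q * S := by
    intro q
    induction q with
    | zero => intro i; simp
    | succ q ih =>
      intro i
      have h1 : (m+1)*(q+1) = (m+1)*q + (m+1) := by ring
      rw [h1, Finset.sum_range_add, ih]
      have h2 : ∑ j ∈ Finset.range (m+1), x (i + (((m+1)*q + j : ℕ) : Fin (m+1))) =
          ∑ j ∈ Finset.range (m+1), x (i + (j : Fin (m+1))) := by
        refine Finset.sum_congr rfl fun j _ => ?_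
        congr 2
        push_cast
        simp [Fin.natCast_self]
      rw [h2, hcyc_sum]
      push_cast
      ring
  -- for each k, lower bound v k x i for all i
  have hlow : ∀ (k : ℕ) (i : Fin (m+1)), S / (m+1) - (m+1) * (U - L) / 2^k ≤ v k x i := by
    intro k i
    obtain ⟨q, r, hr, hqr⟩ : ∃ q r, r < m+1 ∧ 2^k = (m+1)*q + r :=
      ⟨2^k / (m+1), 2^k % (m+1), Nat.mod_lt _ (Nat.succ_pos m), (Nat.div_add_mod _ _).symm⟩
    have hsum : ∑ j ∈ Finset.range (2^k), x (i + (j : Fin (m+1))) =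
        q * S + ∑ j ∈ Finset.range r, x (i + (((m+1)*q + j : ℕ) : Fin (m+1))) := by
      rw [hqr, Finset.sum_range_add, hfull]
    have hrem : (r : ℝ) * L ≤ ∑ j ∈ Finset.range r, x (i + (((m+1)*q + j : ℕ) : Fin (m+1))) := by
      calc (r:ℝ) * L = ∑ _j ∈ Finset.range r, L := by simp [mul_comm]
        _ ≤ _ := Finset.sum_le_sum fun j _ => hL _ (Finset.mem_univ _)
    have hvk : v k x i = (∑ j ∈ Finset.range (2^k), x (i + (j : Fin (m+1)))) / 2^k := rfl
    have h2pos : (0:ℝ) < 2^k := by positivity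
    have hmpos : (0:ℝ) < (m+1 : ℝ) := by positivity
    have h2k : ((2:ℝ))^k = (m+1) * q + r := by
      have := congrArg (Nat.cast : ℕ → ℝ) hqr
      push_cast at this
      linarith [this]
    have hrle : (r:ℝ) ≤ m+1 := by exact_mod_cast hr.le
    have hrnn : (0:ℝ) ≤ r := Nat.cast_nonneg r
    have hmnn : (0:ℝ) ≤ (m:ℝ)+1 := by positivity
    set R := ∑ j ∈ Finset.range r, x (i + (((m+1)*q + j : ℕ) : Fin (m+1))) with hRdef
    have hint1 : (r:ℝ)*(S-((m:ℝ)+1)*L) ≤ ((m:ℝ)+1)*(S-((m:ℝ)+1)*L) :=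
      mul_le_mul_of_nonneg_right hrle (by linarith)
    have hint3 : ((m:ℝ)+1)*((r:ℝ)*L) ≤ ((m:ℝ)+1)*R := mul_le_mul_of_nonneg_left hrem hmnn
    have hint4 : ((m:ℝ)+1)*S ≤ ((m:ℝ)+1)*(((m:ℝ)+1)*U) := mul_le_mul_of_nonneg_left hSU hmnn
    have key : S * 2^k ≤ ((m:ℝ)+1) * ((q:ℝ)*S + R) + ((m:ℝ)+1)*(((m:ℝ)+1)*(U-L)) := by
      rw [h2k]
      nlinarith [hint1, hint3, hint4]
    rw [hvk, hsum]
    rw [div_sub_div _ _ (ne_of_gt hmpos) (ne_of_gt h2pos), div_le_div_iff₀ (by positivity) h2pos]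
    nlinarith [mul_le_mul_of_nonneg_right key h2pos.le]
  -- combine: for each k, S/(m+1) - c/2^k ≤ M x
  have hkey : ∀ k : ℕ, S / (m+1) ≤ M x + (m+1) * (U - L) / 2^k := by
    intro k
    obtain ⟨hIk, hNk⟩ := hmain k x hx
    obtain ⟨i, hi⟩ := (hNmean (v k x) hIk).1
    have := hlow k i
    linarith
  have hc : Tendsto (fun k : ℕ => M x + (m+1) * (U - L) / 2^k) atTop (nhds (M x)) := by
    have h1 : Tendsto (fun k : ℕ => ((m+1) * (U - L)) * (1/2 : ℝ)^k) atTop (nhds 0) := by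
      have := (tendsto_pow_atTop_nhds_zero_of_lt_one (by norm_num : (0:ℝ) ≤ 1/2)
        (by norm_num : (1/2:ℝ) < 1)).const_mul ((m+1) * (U - L))
      simpa using this
    have h2 : (fun k : ℕ => M x + (m+1) * (U - L) / 2^k) =
        fun k : ℕ => M x + ((m+1) * (U - L)) * (1/2 : ℝ)^k := by
      funext k
      rw [div_pow, one_pow]
      ring
    rw [h2]
    simpa using tendsto_const_nhds.add h1
  have hfin : S / (m+1) ≤ M x := ge_of_tendsto' hc hkey
  simpa [hSdef] using hfin
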